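/- arXiv:1707.00523 — 2 statements merged into one kernel-verified Lean document; each statement's English description precedes it below -/
import Mathlib

section
/- Fix reals λ > 0, β > 0, λ₁ > 0. Define p₀^E(t) = exp(-λ λ₁ t/(λ₁+β)) and, for integers k ≥ 1, p_k^E(t) = e^{-λ t} (λ₁^k λ β t/(λ₁+β)^{k+1}) E^{k+1}_{1,2}(λ β t/(λ₁+β)). Then for every integer k ≥ 0 and every t > 0, d/dt p_k^E(t) = -(λ λ₁/(λ₁+β)) p_k^E(t) + (λ β/(λ₁+β)) Σ_{m=1}^{k} (λ₁/(λ₁+β))^m p_{k-m}^E(t), where the sum is empty for k = 0. -/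
open Real MeasureTheory Filter Finset

/-- Wright function `Φ(ρ, δ, z) = Σ_{j≥0} z^j / (j! Γ(ρ j + δ))`. -/
noncomputable def wright (ρ δ z : ℝ) : ℝ :=
  ∑' j : ℕ, z ^ j / ((Nat.factorial j : ℝ) * Real.Gamma (ρ * (j : ℝ) + δ))

/-- Wright function with second parameter 0:
`Φ(ρ, 0, z) = Σ_{j≥1} z^j / (j! Γ(ρ j))`. -/
noncomputable def wright0 (ρ z : ℝ) : ℝ :=
  ∑' j : ℕ, z ^ (j + 1) /
    ((Nat.factorial (j + 1) : ℝ) * Real.Gamma (ρ * ((j : ℝ) + 1)))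

/-- Two-parameter Mittag-Leffler function `E_{ρ,δ}(z) = Σ_{j≥0} z^j / Γ(ρ j + δ)`. -/
noncomputable def ml2 (ρ δ z : ℝ) : ℝ :=
  ∑' j : ℕ, z ^ j / Real.Gamma (ρ * (j : ℝ) + δ)

/-- Three-parameter generalized Mittag-Leffler function
`E^γ_{ρ,δ}(z) = Σ_{j≥0} (Γ(γ+j)/Γ(γ)) z^j / (j! Γ(ρ j + δ))`. -/
noncomputable def ml3 (γ ρ δ z : ℝ) : ℝ :=
  ∑' j : ℕ, (Real.Gamma (γ + (j : ℝ)) / Real.Gamma γ) * z ^ j /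
    ((Nat.factorial j : ℝ) * Real.Gamma (ρ * (j : ℝ) + δ))

/-- Modified Bessel function of the first kind of order 0:
`I₀(z) = Σ_{j≥0} (z/2)^{2j} / (j!)²`. -/
noncomputable def besselI0 (z : ℝ) : ℝ :=
  ∑' j : ℕ, (z / 2) ^ (2 * j) / ((Nat.factorial j : ℝ) * (Nat.factorial j : ℝ))


noncomputable def gg (k : ℕ) (x : ℝ) : ℝ :=
  ∑' j : ℕ, (Nat.choose (k + j) j : ℝ) * x ^ (j + 1) / (Nat.factorial (j + 1) : ℝ)

noncomputable def hh (k : ℕ) (x : ℝ) : ℝ :=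
  ∑' j : ℕ, (Nat.choose (k + j) j : ℝ) * x ^ j / (Nat.factorial j : ℝ)

lemma choose_le_two_pow (k j : ℕ) : (Nat.choose (k + j) j : ℝ) ≤ 2 ^ k * 2 ^ j := by
  have h : Nat.choose (k + j) j ≤ 2 ^ (k + j) := by
    calc Nat.choose (k + j) j ≤ ∑ m ∈ range (k + j + 1), Nat.choose (k + j) m :=
          Finset.single_le_sum (fun m _ => Nat.zero_le _) (by simp)
      _ = 2 ^ (k + j) := Nat.sum_range_choose _
  calc (Nat.choose (k + j) j : ℝ) ≤ (2 ^ (k + j) : ℕ) := by exact_mod_cast h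
    _ = 2 ^ k * 2 ^ j := by push_cast [pow_add]; ring

lemma sumH (k : ℕ) (x : ℝ) :
    Summable (fun j : ℕ => (Nat.choose (k + j) j : ℝ) * x ^ j / (Nat.factorial j : ℝ)) := by
  refine Summable.of_norm_bounded (g := fun j => 2 ^ k * ((2 * |x|) ^ j / (Nat.factorial j : ℝ)))
    ((Real.summable_pow_div_factorial (2 * |x|)).mul_left _) (fun j => ?_)
  have h1 : (0:ℝ) < (Nat.factorial j : ℝ) := by positivity
  calc ‖(Nat.choose (k + j) j : ℝ) * x ^ j / (Nat.factorial j : ℝ)‖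
      = (Nat.choose (k + j) j : ℝ) * |x| ^ j / (Nat.factorial j : ℝ) := by
        rw [norm_div, norm_mul, Real.norm_natCast, norm_pow, Real.norm_eq_abs,
          Real.norm_natCast]
    _ ≤ (2 ^ k * 2 ^ j) * |x| ^ j / (Nat.factorial j : ℝ) := by
        gcongr
        · exact choose_le_two_pow k j
    _ = 2 ^ k * ((2 * |x|) ^ j / (Nat.factorial j : ℝ)) := by rw [mul_pow]; ring

lemma sumG (k : ℕ) (x : ℝ) :
    Summable (fun j : ℕ => (Nat.choose (k + j) j : ℝ) * x ^ (j + 1) / (Nat.factorial (j + 1) : ℝ)) := by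
  refine Summable.of_norm_bounded
    (g := fun j => (2 ^ k * |x|) * ((2 * |x|) ^ j / (Nat.factorial j : ℝ)))
    ((Real.summable_pow_div_factorial (2 * |x|)).mul_left _) (fun j => ?_)
  have h1 : (0:ℝ) < (Nat.factorial (j + 1) : ℝ) := by positivity
  have h2 : (Nat.factorial j : ℝ) ≤ (Nat.factorial (j + 1) : ℝ) := by
    exact_mod_cast Nat.factorial_le (Nat.le_succ j)
  calc ‖(Nat.choose (k + j) j : ℝ) * x ^ (j + 1) / (Nat.factorial (j + 1) : ℝ)‖
      = (Nat.choose (k + j) j : ℝ) * |x| ^ (j + 1) / (Nat.factorial (j + 1) : ℝ) := by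
        rw [norm_div, norm_mul, Real.norm_natCast, norm_pow, Real.norm_eq_abs,
          Real.norm_natCast]
    _ ≤ (2 ^ k * 2 ^ j) * |x| ^ (j + 1) / (Nat.factorial j : ℝ) := by
        gcongr
        · exact choose_le_two_pow k j
    _ = (2 ^ k * |x|) * ((2 * |x|) ^ j / (Nat.factorial j : ℝ)) := by
        rw [mul_pow, pow_succ]; ring

lemma gg_hasDerivAt (k : ℕ) (x : ℝ) : HasDerivAt (gg k) (hh k x) x := by
  have hR : |x| < |x| + 1 := lt_add_one _
  refine hasDerivAt_tsum_of_isPreconnected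
    (u := fun j => 2 ^ k * ((2 * (|x| + 1)) ^ j / (Nat.factorial j : ℝ)))
    (g' := fun j y => (Nat.choose (k + j) j : ℝ) * y ^ j / (Nat.factorial j : ℝ))
    ((Real.summable_pow_div_factorial (2 * (|x| + 1))).mul_left _)
    (isOpen_Ioo (a := -(|x| + 1)) (b := |x| + 1)) (isPreconnected_Ioo)
    (fun j y _ => ?_) (fun j y hy => ?_) (y₀ := 0) ?_ ?_ ?_
  · -- termwise derivative
    have h := ((hasDerivAt_pow (j + 1) y).const_mul
      ((Nat.choose (k + j) j : ℝ))).div_const ((Nat.factorial (j + 1) : ℝ))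
    refine h.congr_deriv ?_
    have : (Nat.factorial (j + 1) : ℝ) = (j + 1) * (Nat.factorial j : ℝ) := by
      push_cast [Nat.factorial_succ]; ring
    rw [this]
    have hj : (0:ℝ) < (Nat.factorial j : ℝ) := by positivity
    field_simp
    simp only [Nat.add_sub_cancel]; push_cast
    ring
  · -- bound
    have hy' : |y| ≤ |x| + 1 := by
      rw [abs_le]; constructor <;> [exact hy.1.le; exact hy.2.le]
    have h1 : (0:ℝ) < (Nat.factorial j : ℝ) := by positivity
    calc ‖(Nat.choose (k + j) j : ℝ) * y ^ j / (Nat.factorial j : ℝ)‖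
        = (Nat.choose (k + j) j : ℝ) * |y| ^ j / (Nat.factorial j : ℝ) := by
          rw [norm_div, norm_mul, Real.norm_natCast, norm_pow, Real.norm_eq_abs,
            Real.norm_natCast]
      _ ≤ (2 ^ k * 2 ^ j) * (|x| + 1) ^ j / (Nat.factorial j : ℝ) := by
          gcongr
          · exact choose_le_two_pow k j

      _ = 2 ^ k * ((2 * (|x| + 1)) ^ j / (Nat.factorial j : ℝ)) := by rw [mul_pow]; ring
  · constructor
    · nlinarith [abs_nonneg x]
    · positivity
  · -- summable at 0
    refine summable_of_ne_finset_zero (s := ∅) (fun j _ => ?_)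
    simp [zero_pow]
  · constructor <;> [linarith [neg_abs_le x]; linarith [le_abs_self x]]

lemma exp_tsum (x : ℝ) : Real.exp x = ∑' n : ℕ, x ^ n / (Nat.factorial n : ℝ) := by
  rw [Real.exp_eq_exp_ℝ, NormedSpace.exp_eq_tsum_div]

lemma hockey (k m : ℕ) :
    1 + ∑ i ∈ Icc 1 k, Nat.choose (i + m) m = Nat.choose (k + m + 1) (m + 1) := by
  induction k with
  | zero => simp
  | succ n ih =>
      rw [Finset.sum_Icc_succ_top (by omega), ← add_assoc, ih]
      have e1 : n + 1 + m = n + m + 1 := by omega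
      rw [e1]
      exact (add_comm _ _).trans (Nat.choose_succ_succ (n + m + 1) m).symm

lemma hh_eq (k : ℕ) (x : ℝ) : hh k x = Real.exp x + ∑ i ∈ Icc 1 k, gg i x := by
  have hexp : Real.exp x = x ^ 0 / (Nat.factorial 0 : ℝ) +
      ∑' j : ℕ, x ^ (j + 1) / (Nat.factorial (j + 1) : ℝ) := by
    rw [exp_tsum, Summable.tsum_eq_zero_add (Real.summable_pow_div_factorial x)]
  have hhh : hh k x = (Nat.choose (k + 0) 0 : ℝ) * x ^ 0 / (Nat.factorial 0 : ℝ) +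
      ∑' j : ℕ, (Nat.choose (k + (j + 1)) (j + 1) : ℝ) * x ^ (j + 1) /
        (Nat.factorial (j + 1) : ℝ) := by
    rw [hh, Summable.tsum_eq_zero_add (sumH k x)]
  have hsum3 : Summable (fun j : ℕ => x ^ (j + 1) / (Nat.factorial (j + 1) : ℝ)) :=
    (summable_nat_add_iff 1).mpr (Real.summable_pow_div_factorial x)
  rw [hhh, hexp]
  simp only [pow_zero, Nat.factorial_zero, Nat.choose_zero_right, Nat.cast_one,
    Nat.cast_ofNat, one_mul]
  rw [add_assoc]
  congr 1
  -- remaining: ∑' j, C(k+j+1, j+1) x^{j+1}/(j+1)! = (∑' j, x^{j+1}/(j+1)!) + ∑_i gg i x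
  have hgg : ∀ i ∈ Icc 1 k, gg i x =
      ∑' j : ℕ, (Nat.choose (i + j) j : ℝ) * x ^ (j + 1) / (Nat.factorial (j + 1) : ℝ) :=
    fun i _ => rfl
  rw [Finset.sum_congr rfl hgg, ← Summable.tsum_finsetSum (fun i _ => sumG i x), ← Summable.tsum_add hsum3
    (summable_sum (fun i _ => sumG i x))]
  refine tsum_congr (fun j => ?_)
  have hck : (Nat.choose (k + (j + 1)) (j + 1) : ℝ) =
      1 + ∑ i ∈ Icc 1 k, (Nat.choose (i + j) j : ℝ) := by
    have h := hockey k j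
    have e : k + (j + 1) = k + j + 1 := by omega
    rw [e, ← h]
    push_cast
    ring
  rw [hck, add_mul, one_mul, add_div, Finset.sum_mul, Finset.sum_div]


lemma ml3_eq (k : ℕ) (x : ℝ) : x * ml3 ((k : ℝ) + 1) 1 2 x = gg k x := by
  rw [ml3, gg, ← tsum_mul_left]
  refine tsum_congr (fun j => ?_)
  have h1 : Real.Gamma ((k : ℝ) + 1 + (j : ℝ)) = (Nat.factorial (k + j) : ℝ) := by
    have e : (k : ℝ) + 1 + (j : ℝ) = ((k + j : ℕ) : ℝ) + 1 := by push_cast; ring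
    rw [e, Real.Gamma_nat_eq_factorial]
  have h2 : Real.Gamma ((k : ℝ) + 1) = (Nat.factorial k : ℝ) :=
    Real.Gamma_nat_eq_factorial k
  have h3 : Real.Gamma (1 * (j : ℝ) + 2) = (Nat.factorial (j + 1) : ℝ) := by
    have e : 1 * (j : ℝ) + 2 = ((j + 1 : ℕ) : ℝ) + 1 := by push_cast; ring
    rw [e, Real.Gamma_nat_eq_factorial]
  rw [h1, h2, h3]
  have hch : (Nat.factorial (k + j) : ℝ) =
      (Nat.choose (k + j) j : ℝ) * (Nat.factorial j : ℝ) * (Nat.factorial k : ℝ) := by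
    have := Nat.choose_mul_factorial_mul_factorial (Nat.le_add_left j k)
    have e : k + j - j = k := by omega
    rw [e] at this
    exact_mod_cast this.symm
  have f1 : (0:ℝ) < (Nat.factorial j : ℝ) := by positivity
  have f2 : (0:ℝ) < (Nat.factorial k : ℝ) := by positivity
  have f3 : (0:ℝ) < (Nat.factorial (j + 1) : ℝ) := by positivity
  rw [hch, pow_succ]
  field_simp

/-- difference-differential equations for the pmf of a Poisson
process time-changed by a compound Poisson-exponential subordinator. -/
theorem stmt4 (lam β lam1 : ℝ) (hlam : 0 < lam) (hβ : 0 < β) (hlam1 : 0 < lam1)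
    (p : ℕ → ℝ → ℝ)
    (hp0 : ∀ t : ℝ, p 0 t = Real.exp (-(lam * lam1 * t / (lam1 + β))))
    (hpk : ∀ k : ℕ, 1 ≤ k → ∀ t : ℝ,
      p k t = Real.exp (-(lam * t)) *
        (lam1 ^ k * lam * β * t / (lam1 + β) ^ (k + 1)) *
        ml3 ((k : ℝ) + 1) 1 2 (lam * β * t / (lam1 + β))) :
    ∀ (k : ℕ) (t : ℝ), 0 < t →
      HasDerivAt (p k)
        (-(lam * lam1 / (lam1 + β)) * p k t +
          lam * β / (lam1 + β) *
            ∑ m ∈ Finset.Icc 1 k, (lam1 / (lam1 + β)) ^ m * p (k - m) t) t := by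
  intro k t ht
  have hLpos : 0 < lam1 + β := by linarith
  have hLne : (lam1 + β) ≠ 0 := ne_of_gt hLpos
  set r : ℝ := lam1 / (lam1 + β) with hr
  set c : ℝ := lam * β / (lam1 + β) with hc
  set a : ℝ := lam * lam1 / (lam1 + β) with ha
  have hac : a + c = lam := by rw [ha, hc]; field_simp
  have hrep : ∀ m : ℕ, 1 ≤ m → ∀ s : ℝ,
      p m s = Real.exp (-(lam * s)) * (r ^ m * gg m (c * s)) := by
    intro m hm s
    rw [hpk m hm s, ← ml3_eq m (c * s)]
    have hfac : lam1 ^ m * lam * β * s / (lam1 + β) ^ (m + 1) = r ^ m * (c * s) := by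
      rw [hr, hc, div_pow, pow_succ]
      field_simp
    rw [hfac]
    rw [show lam * β * s / (lam1 + β) = c * s by rw [hc]; ring]
    ring
  cases k with
  | zero =>
      have h1 : HasDerivAt (fun s : ℝ => -a * s) (-a) t := by
        simpa using (hasDerivAt_id t).const_mul (-a)
      have h2 := h1.exp
      have heq : p 0 = fun s : ℝ => Real.exp (-a * s) := by
        funext s
        rw [hp0 s, ha]
        congr 1
        ring
      rw [heq]
      convert h2 using 1
      simp
      ring
  | succ n =>
      have heq : p (n + 1) = fun s : ℝ =>
          Real.exp (-(lam * s)) * (r ^ (n + 1) * gg (n + 1) (c * s)) :=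
        funext fun s => hrep (n + 1) (by omega) s
      have h1 : HasDerivAt (fun s : ℝ => -(lam * s)) (-lam) t := by
        simpa using (hasDerivAt_neg t).const_mul lam
      have h2 := h1.exp
      have h3 : HasDerivAt (fun s : ℝ => c * s) c t := by
        simpa using (hasDerivAt_id t).const_mul c
      have h4 : HasDerivAt (fun s : ℝ => gg (n + 1) (c * s)) (hh (n + 1) (c * t) * c) t :=
        (gg_hasDerivAt (n + 1) (c * t)).comp t h3
      have h5 := h4.const_mul (r ^ (n + 1))
      have hde := h2.mul h5
      have hsum : ∑ m ∈ Icc 1 (n + 1), r ^ m * p (n + 1 - m) t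
          = Real.exp (-(lam * t)) * (r ^ (n + 1) *
              (Real.exp (c * t) + ∑ i ∈ Icc 1 n, gg i (c * t))) := by
        rw [Finset.sum_Icc_succ_top (by omega)]
        have hm : ∀ m ∈ Icc 1 n, r ^ m * p (n + 1 - m) t
            = Real.exp (-(lam * t)) * r ^ (n + 1) * gg (n + 1 - m) (c * t) := by
          intro m hm
          simp only [Finset.mem_Icc] at hm
          rw [hrep (n + 1 - m) (by omega) t]
          have e : r ^ (n + 1) = r ^ m * r ^ (n + 1 - m) := by
            rw [← pow_add]
            congr 1
            omega
          rw [e]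
          ring
        rw [Finset.sum_congr rfl hm, Nat.sub_self, hp0 t]
        have hrefl : ∑ m ∈ Icc 1 n, gg (n + 1 - m) (c * t) = ∑ i ∈ Icc 1 n, gg i (c * t) := by
          refine Finset.sum_nbij' (fun m => n + 1 - m) (fun i => n + 1 - i)
            ?_ ?_ ?_ ?_ ?_ <;> intro x hx <;> simp only [Finset.mem_Icc] at hx ⊢ <;>
            first
              | omega
              | (congr 1; omega)
        rw [← Finset.mul_sum, hrefl]
        have hexp0 : Real.exp (-(lam * lam1 * t / (lam1 + β)))
            = Real.exp (-(lam * t)) * Real.exp (c * t) := by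
          rw [← Real.exp_add]
          congr 1
          rw [hc]
          field_simp
          ring
        rw [hexp0]
        ring
      have hkey : hh (n + 1) (c * t)
          = Real.exp (c * t) + (∑ i ∈ Icc 1 n, gg i (c * t)) + gg (n + 1) (c * t) := by
        rw [hh_eq (n + 1) (c * t), Finset.sum_Icc_succ_top (by omega : 1 ≤ n + 1)]
        ring
      rw [heq]
      refine hde.congr_deriv ?_
      rw [← heq, hrep (n + 1) (by omega) t, hsum, hkey]
      have : lam = a + c := hac.symm
      rw [this]
      ring
end

section
/- Fix reals β > 0, λ₁ > 0 and let λ = β. Define p₀^E(t) = exp(-β λ₁ t/(λ₁+β)), p_k^E(t) = e^{-β t}(λ₁^k β² t/(λ₁+β)^{k+1}) E^{k+1}_{1,2}(β² t/(λ₁+β)) for k ≥ 1, and p_k^I(t) = e^{-β t}(β λ₁^k (k+1)/(λ₁+β)^{k+1}) E^{k+1}_{1,1}(β² t/(λ₁+β)) for k ≥ 0. Then for every integer k ≥ 0 and every t ≥ 0, p_k^I(t) = (k+1)·(β/(λ₁+β))·[ p_k^E(t) + Σ_{m=1}^{k} (λ₁/(λ₁+β))^m p_{k-m}^E(t) ],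 where the sum is empty for k = 0. -/
open Real MeasureTheory Filter Finset

noncomputable def Fser (k : ℕ) (z : ℝ) : ℝ :=
  ∑' j : ℕ, ((k + j).choose j : ℝ) * z ^ j / (Nat.factorial j : ℝ)

noncomputable def Gser (k : ℕ) (z : ℝ) : ℝ :=
  ∑' j : ℕ, ((k + j).choose j : ℝ) * z ^ j / (Nat.factorial (j + 1) : ℝ)

lemma choose_le_two_pow' (n k : ℕ) : n.choose k ≤ 2 ^ n := by
  rcases le_or_gt k n with h | h
  · calc n.choose k ≤ ∑ i ∈ range (n + 1), n.choose i :=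
        Finset.single_le_sum (f := fun i => n.choose i) (fun _ _ => Nat.zero_le _)
          (Finset.mem_range.mpr (Nat.lt_succ_of_le h))
    _ = 2 ^ n := Nat.sum_range_choose n
  · rw [Nat.choose_eq_zero_of_lt h]; positivity

lemma bound_aux (k : ℕ) (z : ℝ) (j : ℕ) :
    ((k + j).choose j : ℝ) * |z| ^ j ≤ 2 ^ k * ((2 * |z|) ^ j) := by
  have h1 : ((k + j).choose j : ℝ) ≤ 2 ^ (k + j) := by
    exact_mod_cast choose_le_two_pow' (k + j) j
  have h2 : (0:ℝ) ≤ |z| ^ j := by positivity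
  calc ((k + j).choose j : ℝ) * |z| ^ j ≤ 2 ^ (k + j) * |z| ^ j := by
        exact mul_le_mul_of_nonneg_right h1 h2
  _ = 2 ^ k * ((2 * |z|) ^ j) := by rw [pow_add, mul_pow]; ring

lemma summable_F (k : ℕ) (z : ℝ) :
    Summable (fun j : ℕ => ((k + j).choose j : ℝ) * z ^ j / (Nat.factorial j : ℝ)) := by
  apply Summable.of_norm_bounded (g := fun j => 2 ^ k * ((2 * |z|) ^ j / (Nat.factorial j : ℝ)))
    ((Real.summable_pow_div_factorial (2 * |z|)).mul_left _)
  intro j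
  have hf : (0:ℝ) < (Nat.factorial j : ℝ) := by exact_mod_cast j.factorial_pos
  rw [norm_div, norm_mul, Real.norm_natCast, norm_pow, Real.norm_eq_abs,
    Real.norm_natCast]
  rw [← mul_div_assoc, div_le_div_iff_of_pos_right hf]
  exact bound_aux k z j

lemma summable_G (k : ℕ) (z : ℝ) :
    Summable (fun j : ℕ => ((k + j).choose j : ℝ) * z ^ j / (Nat.factorial (j + 1) : ℝ)) := by
  apply Summable.of_norm_bounded (g := fun j => 2 ^ k * ((2 * |z|) ^ j / (Nat.factorial j : ℝ)))
    ((Real.summable_pow_div_factorial (2 * |z|)).mul_left _)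
  intro j
  have hf : (0:ℝ) < (Nat.factorial j : ℝ) := by exact_mod_cast j.factorial_pos
  have hf1 : (0:ℝ) < (Nat.factorial (j + 1) : ℝ) := by exact_mod_cast (j + 1).factorial_pos
  have hff : (Nat.factorial j : ℝ) ≤ (Nat.factorial (j + 1) : ℝ) := by
    exact_mod_cast Nat.factorial_le (Nat.le_succ j)
  rw [norm_div, norm_mul, Real.norm_natCast, norm_pow, Real.norm_eq_abs, Real.norm_natCast]
  calc ((k + j).choose j : ℝ) * |z| ^ j / (Nat.factorial (j + 1) : ℝ)
      ≤ ((k + j).choose j : ℝ) * |z| ^ j / (Nat.factorial j : ℝ) := by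
        apply div_le_div_of_nonneg_left _ hf hff
        positivity
  _ ≤ 2 ^ k * ((2 * |z|) ^ j / (Nat.factorial j : ℝ)) := by
        rw [← mul_div_assoc, div_le_div_iff_of_pos_right hf]
        exact bound_aux k z j

lemma Fser_zero (z : ℝ) : Fser 0 z = Real.exp z := by
  rw [Fser, Real.exp_eq_exp_ℝ, NormedSpace.exp_eq_tsum_div]
  apply tsum_congr
  intro j
  simp [Nat.choose_self]

lemma Fser_succ (k : ℕ) (z : ℝ) : Fser (k + 1) z = Fser k z + z * Gser (k + 1) z := by
  have hF1 := summable_F (k + 1) z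
  have hF := summable_F k z
  have hG := summable_G (k + 1) z
  have hs2 : Summable (fun j : ℕ =>
      ((k + (j + 1)).choose (j + 1) : ℝ) * z ^ (j + 1) / (Nat.factorial (j + 1) : ℝ)) :=
    (summable_nat_add_iff 1).mpr hF
  have h3 : Summable (fun j : ℕ =>
      z * (((k + 1 + j).choose j : ℝ) * z ^ j / (Nat.factorial (j + 1) : ℝ))) :=
    hG.mul_left z
  rw [Fser, Fser, Gser, hF1.tsum_eq_zero_add, hF.tsum_eq_zero_add, ← tsum_mul_left]
  have key : ∀ j : ℕ,
      ((k + 1 + (j + 1)).choose (j + 1) : ℝ) * z ^ (j + 1) / (Nat.factorial (j + 1) : ℝ) =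
      ((k + (j + 1)).choose (j + 1) : ℝ) * z ^ (j + 1) / (Nat.factorial (j + 1) : ℝ) +
      z * (((k + 1 + j).choose j : ℝ) * z ^ j / (Nat.factorial (j + 1) : ℝ)) := by
    intro j
    have hpas : ((k + 1 + (j + 1)).choose (j + 1) : ℝ) =
        ((k + (j + 1)).choose (j + 1) : ℝ) + ((k + 1 + j).choose j : ℝ) := by
      have h1 : k + 1 + (j + 1) = (k + 1 + j) + 1 := by omega
      have h2 : k + (j + 1) = k + 1 + j := by omega
      rw [h1, h2, Nat.choose_succ_succ]
      push_cast
      ring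
    rw [hpas, pow_succ]
    ring
  calc (((k + 1 + 0).choose 0 : ℝ) * z ^ 0 / (Nat.factorial 0 : ℝ)) +
      ∑' j : ℕ, ((k + 1 + (j + 1)).choose (j + 1) : ℝ) * z ^ (j + 1) / (Nat.factorial (j + 1) : ℝ)
      = (((k + 0).choose 0 : ℝ) * z ^ 0 / (Nat.factorial 0 : ℝ)) +
        ∑' j : ℕ, (((k + (j + 1)).choose (j + 1) : ℝ) * z ^ (j + 1) / (Nat.factorial (j + 1) : ℝ) +
          z * (((k + 1 + j).choose j : ℝ) * z ^ j / (Nat.factorial (j + 1) : ℝ))) := by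
        simp only [Nat.choose_zero_right, Nat.cast_one, pow_zero, Nat.factorial_zero]
        rw [tsum_congr key]
  _ = _ := by
        rw [Summable.tsum_add hs2 h3]
        ring

lemma Fser_formula (k : ℕ) (z : ℝ) :
    Fser k z = Real.exp z + z * ∑ i ∈ Icc 1 k, Gser i z := by
  induction k with
  | zero => simp [Fser_zero]
  | succ n ih =>
      rw [Fser_succ, ih, Finset.sum_Icc_succ_top (by omega : 1 ≤ n + 1)]
      ring

lemma ml3_one_one (k : ℕ) (z : ℝ) : ml3 ((k : ℝ) + 1) 1 1 z = Fser k z := by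
  unfold ml3 Fser
  apply tsum_congr
  intro j
  have h1 : (k : ℝ) + 1 + (j : ℝ) = ((k + j : ℕ) : ℝ) + 1 := by push_cast; ring
  have h2 : (1 : ℝ) * (j : ℝ) + 1 = ((j : ℕ) : ℝ) + 1 := by ring
  rw [h1, h2, Real.Gamma_nat_eq_factorial, Real.Gamma_nat_eq_factorial,
    Real.Gamma_nat_eq_factorial]
  have hc : (((k + j).factorial : ℕ) : ℝ) =
      ((k + j).choose j : ℝ) * (j.factorial : ℝ) * (k.factorial : ℝ) := by
    have h := Nat.choose_mul_factorial_mul_factorial (Nat.le_add_left j k)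
    rw [Nat.add_sub_cancel] at h
    exact_mod_cast h.symm
  have hj : (j.factorial : ℝ) ≠ 0 := by exact_mod_cast j.factorial_ne_zero
  have hk : (k.factorial : ℝ) ≠ 0 := by exact_mod_cast k.factorial_ne_zero
  rw [hc]
  field_simp

lemma ml3_one_two (k : ℕ) (z : ℝ) : ml3 ((k : ℝ) + 1) 1 2 z = Gser k z := by
  unfold ml3 Gser
  apply tsum_congr
  intro j
  have h1 : (k : ℝ) + 1 + (j : ℝ) = ((k + j : ℕ) : ℝ) + 1 := by push_cast; ring
  have h2 : (1 : ℝ) * (j : ℝ) + 2 = (((j + 1) : ℕ) : ℝ) + 1 := by push_cast; ring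
  rw [h1, h2, Real.Gamma_nat_eq_factorial, Real.Gamma_nat_eq_factorial,
    Real.Gamma_nat_eq_factorial]
  have hc : (((k + j).factorial : ℕ) : ℝ) =
      ((k + j).choose j : ℝ) * (j.factorial : ℝ) * (k.factorial : ℝ) := by
    have h := Nat.choose_mul_factorial_mul_factorial (Nat.le_add_left j k)
    rw [Nat.add_sub_cancel] at h
    exact_mod_cast h.symm
  have hj : (j.factorial : ℝ) ≠ 0 := by exact_mod_cast j.factorial_ne_zero
  have hj1 : ((j + 1).factorial : ℝ) ≠ 0 := by exact_mod_cast (j + 1).factorial_ne_zero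
  have hk : (k.factorial : ℝ) ≠ 0 := by exact_mod_cast k.factorial_ne_zero
  rw [hc]
  field_simp

/-- recursion expressing the pmf `p_k^I` (Poisson process
time-changed by the inverse process) via the pmf `p_k^E` (Poisson process
time-changed by the direct compound Poisson-exponential process), in the case
`λ = β`. -/
theorem stmt13 (β lam1 : ℝ) (hβ : 0 < β) (hlam1 : 0 < lam1)
    (pE : ℕ → ℝ → ℝ) (pI : ℕ → ℝ → ℝ)
    (hpE0 : ∀ t : ℝ, pE 0 t = Real.exp (-(β * lam1 * t / (lam1 + β))))
    (hpEk : ∀ k : ℕ, 1 ≤ k → ∀ t : ℝ,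
      pE k t = Real.exp (-(β * t)) *
        (lam1 ^ k * β ^ 2 * t / (lam1 + β) ^ (k + 1)) *
        ml3 ((k : ℝ) + 1) 1 2 (β ^ 2 * t / (lam1 + β)))
    (hpI : ∀ (k : ℕ) (t : ℝ),
      pI k t = Real.exp (-(β * t)) *
        (β * lam1 ^ k * ((k : ℝ) + 1) / (lam1 + β) ^ (k + 1)) *
        ml3 ((k : ℝ) + 1) 1 1 (β ^ 2 * t / (lam1 + β))) :
    ∀ (k : ℕ) (t : ℝ), 0 ≤ t →
      pI k t = ((k : ℝ) + 1) * (β / (lam1 + β)) *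
        (pE k t + ∑ m ∈ Finset.Icc 1 k, (lam1 / (lam1 + β)) ^ m * pE (k - m) t) := by
  intro k t _
  have hpos : 0 < lam1 + β := add_pos hlam1 hβ
  have hne : lam1 + β ≠ 0 := ne_of_gt hpos
  set x : ℝ := β ^ 2 * t / (lam1 + β) with hxdef
  set E : ℝ := Real.exp (-(β * t)) with hEdef
  have hpE0' : pE 0 t = E * Real.exp x := by
    rw [hpE0, hEdef, hxdef, ← Real.exp_add]
    congr 1
    field_simp
    ring
  have hcomb : pE k t + ∑ m ∈ Finset.Icc 1 k, (lam1 / (lam1 + β)) ^ m * pE (k - m) t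
      = ∑ m ∈ Finset.range (k + 1), (lam1 / (lam1 + β)) ^ m * pE (k - m) t := by
    have h2 : ∀ i : ℕ, 1 + i = i + 1 := fun i => Nat.add_comm 1 i
    have h1 : ∑ m ∈ Finset.Icc 1 k, (lam1 / (lam1 + β)) ^ m * pE (k - m) t
        = ∑ i ∈ Finset.range k, (lam1 / (lam1 + β)) ^ (i + 1) * pE (k - (i + 1)) t := by
      rw [← Finset.Ico_add_one_right_eq_Icc, Finset.sum_Ico_eq_sum_range]
      simp only [h2]
      rfl
    rw [Finset.sum_range_succ' (fun m => (lam1 / (lam1 + β)) ^ m * pE (k - m) t) k, h1]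
    simp only [pow_zero, Nat.sub_zero, one_mul]
    exact add_comm _ _
  set C : ℝ := E * (lam1 ^ k * β ^ 2 * t / (lam1 + β) ^ (k + 1)) with hCdef
  have hterm : ∀ m ∈ Finset.range k,
      (lam1 / (lam1 + β)) ^ m * pE (k - m) t = C * Gser (k - m) x := by
    intro m hm
    have hm' : m < k := Finset.mem_range.mp hm
    rw [hpEk (k - m) (by omega) t, ml3_one_two, ← hxdef, ← hEdef, hCdef]
    have e1 : lam1 ^ m * lam1 ^ (k - m) = lam1 ^ k := by
      rw [← pow_add]; congr 1; omega
    have e2 : (lam1 + β) ^ m * (lam1 + β) ^ (k - m + 1) = (lam1 + β) ^ (k + 1) := by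
      rw [← pow_add]; congr 1; omega
    have key : (lam1 / (lam1 + β)) ^ m * (lam1 ^ (k - m) * β ^ 2 * t / (lam1 + β) ^ (k - m + 1))
        = lam1 ^ k * β ^ 2 * t / (lam1 + β) ^ (k + 1) := by
      rw [div_pow, div_mul_div_comm, e2, show lam1 ^ m * (lam1 ^ (k - m) * β ^ 2 * t)
        = lam1 ^ m * lam1 ^ (k - m) * β ^ 2 * t from by ring, e1]
    calc (lam1 / (lam1 + β)) ^ m *
          (E * (lam1 ^ (k - m) * β ^ 2 * t / (lam1 + β) ^ (k - m + 1)) * Gser (k - m) x)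
        = E * ((lam1 / (lam1 + β)) ^ m *
            (lam1 ^ (k - m) * β ^ 2 * t / (lam1 + β) ^ (k - m + 1))) * Gser (k - m) x := by
          ring
      _ = E * (lam1 ^ k * β ^ 2 * t / (lam1 + β) ^ (k + 1)) * Gser (k - m) x := by rw [key]
  have hrefl : ∑ m ∈ Finset.range k, Gser (k - m) x = ∑ i ∈ Finset.Icc 1 k, Gser i x := by
    have h1 : ∑ m ∈ Finset.range k, Gser (k - m) x
        = ∑ m ∈ Finset.range k, Gser (k - 1 - m + 1) x := by
      apply Finset.sum_congr rfl
      intro m hm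
      have := Finset.mem_range.mp hm
      congr 1
      omega
    have h2 : ∀ i : ℕ, 1 + i = i + 1 := fun i => Nat.add_comm 1 i
    rw [h1, Finset.sum_range_reflect (fun j => Gser (j + 1) x) k,
      ← Finset.Ico_add_one_right_eq_Icc, Finset.sum_Ico_eq_sum_range]
    simp only [h2]
    rfl
  rw [hpI k t, ml3_one_one, ← hxdef, ← hEdef, hcomb, Finset.sum_range_succ,
    Finset.sum_congr rfl hterm, ← Finset.mul_sum, hrefl, Nat.sub_self, hpE0',
    Fser_formula k x, hxdef, hCdef]
  have hq : (lam1 / (lam1 + β)) ^ k = lam1 ^ k / (lam1 + β) ^ k := div_pow lam1 _ k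
  rw [hq]
  field_simp
  ring
end
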